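/- If a group G has a normal subgroup N with N isomorphic to ℤ and the quotient G/N isomorphic to ℤ², then G has a finite complete rewriting system. (This covers the group-theoretic case arising from closed Nil-geometry 3-manifolds.) -/

import Mathlib

/-- One step of rewriting: `w` rewrites to `w'` by replacing a factor `u`
(the left-hand side of a rule in `R`) with `v` (the right-hand side). -/
def RewStep {α : Type} (R : Set (FreeMonoid α × FreeMonoid α))
    (w w' : FreeMonoid α) : Prop :=
  ∃ x u v y : FreeMonoid α, (u, v) ∈ R ∧ w = x * u * y ∧ w' = x * v * y

/-- A word is irreducible if it contains no left-hand side of a rule as a factor. -/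
def RewIrreducible {α : Type} (R : Set (FreeMonoid α × FreeMonoid α))
    (w : FreeMonoid α) : Prop :=
  ¬ ∃ x u v y : FreeMonoid α, (u, v) ∈ R ∧ w = x * u * y

/-- `(π, R)` is a complete rewriting system for the group `G`:
(i) the induced monoid homomorphism `A* → G` is surjective and the monoid presented by
`⟨A ∣ u = v, (u,v) ∈ R⟩` maps isomorphically onto `G` (its defining congruence is exactly
the kernel congruence of the evaluation);
(ii) there is no infinite sequence of rewritings (Noetherian);
(iii) every element of `G` has exactly one irreducible representative word. -/
def IsCompleteRewritingSystem {α : Type} {G : Type*} [Group G] (π : α → G)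
    (R : Set (FreeMonoid α × FreeMonoid α)) : Prop :=
  Function.Surjective (FreeMonoid.lift π) ∧
  (∀ u v : FreeMonoid α,
      FreeMonoid.lift π u = FreeMonoid.lift π v ↔
        conGen (fun w w' => (w, w') ∈ R) u v) ∧
  (∀ f : ℕ → FreeMonoid α, ¬ ∀ m : ℕ, RewStep R (f m) (f (m + 1))) ∧
  (∀ g : G, ∃! w : FreeMonoid α, FreeMonoid.lift π w = g ∧ RewIrreducible R w)

/-- A group has a finite complete rewriting system if there are a finite alphabet `α`,
a map `π : α → G` and a finite set of rules `R` forming a complete rewriting system. -/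
def HasFiniteCompleteRewritingSystem (G : Type*) [Group G] : Prop :=
  ∃ (α : Type) (_ : Finite α) (π : α → G)
    (R : Set (FreeMonoid α × FreeMonoid α)),
    R.Finite ∧ IsCompleteRewritingSystem π R

namespace NilCRS
inductive L : Type
  | a | A | b | B | c | C
deriving DecidableEq

instance : Finite L := by
  have h : Function.Surjective (fun n : Fin 6 => [L.a, L.A, L.b, L.B, L.c, L.C].get n) := by
    intro x
    cases x
    · exact ⟨0, rfl⟩
    · exact ⟨1, rfl⟩
    · exact ⟨2, rfl⟩
    · exact ⟨3, rfl⟩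
    · exact ⟨4, rfl⟩
    · exact ⟨5, rfl⟩
  exact Finite.of_surjective _ h

abbrev FM := FreeMonoid L
open FreeMonoid
def pw (p n : L) (i : ℤ) : FM :=
  ofList (List.replicate i.natAbs (if 0 ≤ i then p else n))

/-- the list of rules, parameterized by the exponents -/
def rulesList (e1 e2 k : ℤ) : List (FM × FM) :=
  [ (of .a * of .A, 1), (of .A * of .a, 1),
    (of .b * of .B, 1), (of .B * of .b, 1),
    (of .c * of .C, 1), (of .C * of .c, 1),
    (of .b * of .a, pw .a .A e1 * of .b),
    (of .b * of .A, pw .a .A (-e1) * of .b),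
    (of .B * of .a, pw .a .A e1 * of .B),
    (of .B * of .A, pw .a .A (-e1) * of .B),
    (of .c * of .a, pw .a .A e2 * of .c),
    (of .c * of .A, pw .a .A (-e2) * of .c),
    (of .C * of .a, pw .a .A e2 * of .C),
    (of .C * of .A, pw .a .A (-e2) * of .C),
    (of .c * of .b, pw .a .A k * (of .b * of .c)),
    (of .c * of .B, pw .a .A (-(e1*k)) * (of .B * of .c)),
    (of .C * of .b, pw .a .A (-(e2*k)) * (of .b * of .C)),
    (of .C * of .B, pw .a .A (e1*e2*k) * (of .B * of .C)) ]

/-- interpretation of each letter as a function ℕ → ℕ -/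
def mval (k : ℤ) : L → ℕ → ℕ
  | .a, x => x + 1
  | .A, x => x + 1
  | .b, x => 2*x + (k.natAbs + 1)
  | .B, x => 2*x + (k.natAbs + 1)
  | .c, x => 3*x + 1
  | .C, x => 3*x + 1

def evalW (k : ℤ) (w : FM) (x : ℕ) : ℕ := (toList w).foldr (mval k) x

lemma evalW_mul (k : ℤ) (u v : FM) (x : ℕ) :
    evalW k (u * v) x = evalW k u (evalW k v x) := by
  simp [evalW, toList_mul, List.foldr_append]

lemma evalW_strictMono (k : ℤ) (w : FM) : StrictMono (evalW k w) := by
  induction w using FreeMonoid.recOn with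
  | one => exact fun x y h => h
  | of_mul l w ih =>
      intro x y h
      have := ih h
      show mval k l (evalW k w x) < mval k l (evalW k w y)
      cases l <;> simp [mval] <;> omega

lemma evalW_pw_aA (k : ℤ) (i : ℤ) (x : ℕ) : evalW k (pw .a .A i) x = x + i.natAbs := by
  unfold evalW pw
  rcases le_or_gt 0 i with h | h
  · rw [if_pos h]
    induction i.natAbs with
    | zero => rfl
    | succ m ih => rw [List.replicate_succ]; simp only [toList_ofList] at ih ⊢
                   simp [List.foldr_cons, ih, mval]; omega
  · rw [if_neg (not_le.mpr h)]
    induction i.natAbs with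
    | zero => rfl
    | succ m ih => rw [List.replicate_succ]; simp only [toList_ofList] at ih ⊢
                   simp [List.foldr_cons, ih, mval]; omega

lemma evalW_of (k : ℤ) (l : L) (x : ℕ) : evalW k (FreeMonoid.of l) x = mval k l x := rfl

lemma evalW_one (k : ℤ) (x : ℕ) : evalW k 1 x = x := rfl

lemma rules_decrease (e1 e2 k : ℤ) (he1 : e1 = 1 ∨ e1 = -1) (he2 : e2 = 1 ∨ e2 = -1)
    (u v : FM) (h : (u, v) ∈ rulesList e1 e2 k) (x : ℕ) :
    evalW k v x < evalW k u x := by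
  have h1 : (e1).natAbs = 1 := by rcases he1 with h | h <;> simp [h]
  have h2 : (e2).natAbs = 1 := by rcases he2 with h | h <;> simp [h]
  simp only [rulesList, List.mem_cons, List.not_mem_nil, or_false, Prod.mk.injEq] at h
  rcases h with ⟨rfl,rfl⟩|⟨rfl,rfl⟩|⟨rfl,rfl⟩|⟨rfl,rfl⟩|⟨rfl,rfl⟩|⟨rfl,rfl⟩|⟨rfl,rfl⟩|⟨rfl,rfl⟩|
    ⟨rfl,rfl⟩|⟨rfl,rfl⟩|⟨rfl,rfl⟩|⟨rfl,rfl⟩|⟨rfl,rfl⟩|⟨rfl,rfl⟩|⟨rfl,rfl⟩|⟨rfl,rfl⟩|⟨rfl,rfl⟩|⟨rfl,rfl⟩ <;>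
    simp only [evalW_mul, evalW_pw_aA, evalW_of, evalW_one, mval, Int.natAbs_neg,
      Int.natAbs_mul, h1, h2, one_mul] <;> omega


lemma noetherian (e1 e2 k : ℤ) (he1 : e1 = 1 ∨ e1 = -1) (he2 : e2 = 1 ∨ e2 = -1)
    (f : ℕ → FM) (hf : ∀ m : ℕ, RewStep {p | p ∈ rulesList e1 e2 k} (f m) (f (m + 1))) :
    False := by
  have key : ∀ m, evalW k (f (m+1)) 0 < evalW k (f m) 0 := by
    intro m
    obtain ⟨x, u, v, y, hr, h1, h2⟩ := hf m
    rw [h1, h2, evalW_mul, evalW_mul, evalW_mul, evalW_mul]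
    exact evalW_strictMono k x (rules_decrease e1 e2 k he1 he2 u v hr _)
  have bound : ∀ m, evalW k (f m) 0 + m ≤ evalW k (f 0) 0 := by
    intro m
    induction m with
    | zero => omega
    | succ m ih => have := key m; omega
  have := bound (evalW k (f 0) 0 + 1)
  omega


def rank : L → ℕ
  | .a => 0 | .A => 0 | .b => 1 | .B => 1 | .c => 2 | .C => 2

def Good (x y : L) : Prop := rank x < rank y ∨ x = y

instance : ∀ x y : L, Decidable (Good x y) := fun x y => by unfold Good; infer_instance

/-- the right-hand side associated to each bad pair -/
def rhs (e1 e2 k : ℤ) : L → L → FM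
  | .b, .a => pw .a .A e1 * of .b
  | .b, .A => pw .a .A (-e1) * of .b
  | .B, .a => pw .a .A e1 * of .B
  | .B, .A => pw .a .A (-e1) * of .B
  | .c, .a => pw .a .A e2 * of .c
  | .c, .A => pw .a .A (-e2) * of .c
  | .C, .a => pw .a .A e2 * of .C
  | .C, .A => pw .a .A (-e2) * of .C
  | .c, .b => pw .a .A k * (of .b * of .c)
  | .c, .B => pw .a .A (-(e1*k)) * (of .B * of .c)
  | .C, .b => pw .a .A (-(e2*k)) * (of .b * of .C)
  | .C, .B => pw .a .A (e1*e2*k) * (of .B * of .C)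
  | _, _ => 1

lemma bad_pair_rule (e1 e2 k : ℤ) (p q : L) (h : ¬ Good p q) :
    (of p * of q, rhs e1 e2 k p q) ∈ rulesList e1 e2 k := by
  cases p <;> cases q <;> first
    | exact absurd (by decide) h
    | (show _ ∈ _; simp only [rhs, rulesList, List.mem_cons]; tauto)

lemma rules_lhs (e1 e2 k : ℤ) (u v : FM) (h : (u, v) ∈ rulesList e1 e2 k) :
    ∃ p q : L, u = of p * of q ∧ ¬ Good p q := by
  simp only [rulesList, List.mem_cons, List.not_mem_nil, or_false, Prod.mk.injEq] at h
  rcases h with ⟨rfl,-⟩|⟨rfl,-⟩|⟨rfl,-⟩|⟨rfl,-⟩|⟨rfl,-⟩|⟨rfl,-⟩|⟨rfl,-⟩|⟨rfl,-⟩|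
    ⟨rfl,-⟩|⟨rfl,-⟩|⟨rfl,-⟩|⟨rfl,-⟩|⟨rfl,-⟩|⟨rfl,-⟩|⟨rfl,-⟩|⟨rfl,-⟩|⟨rfl,-⟩|⟨rfl,-⟩ <;>
    exact ⟨_, _, rfl, by decide⟩

lemma not_chain'_decomp (l : List L) (h : ¬ l.Chain' Good) :
    ∃ x : List L, ∃ p q : L, ∃ y : List L, l = x ++ p :: q :: y ∧ ¬ Good p q := by
  induction l with
  | nil => exact absurd List.isChain_nil h
  | cons p l ih =>
      match l, h with
      | [], h => exact absurd (List.isChain_singleton p) h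
      | q :: l, h =>
          by_cases hg : Good p q
          · have : ¬ (q :: l).Chain' Good := fun hc => h (List.isChain_cons_cons.mpr ⟨hg, hc⟩)
            obtain ⟨x, p', q', y, hl, hb⟩ := ih this
            exact ⟨p :: x, p', q', y, by rw [hl, List.cons_append], hb⟩
          · exact ⟨[], p, q, l, rfl, hg⟩

lemma irreducible_iff_chain' (e1 e2 k : ℤ) (w : FM) :
    RewIrreducible {p | p ∈ rulesList e1 e2 k} w ↔ (toList w).Chain' Good := by
  constructor
  · intro hirr
    by_contra hc
    obtain ⟨x, p, q, y, hl, hb⟩ := not_chain'_decomp _ hc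
    refine hirr ⟨ofList x, of p * of q, rhs e1 e2 k p q, ofList y, bad_pair_rule e1 e2 k p q hb, ?_⟩
    apply toList.injective
    simp [hl, toList_mul]
  · rintro hc ⟨x, u, v, y, hr, hw⟩
    obtain ⟨p, q, rfl, hb⟩ := rules_lhs e1 e2 k u v hr
    apply hb
    have : toList w = toList x ++ p :: q :: toList y := by
      rw [hw]; simp [toList_mul]
    rw [this] at hc
    exact (List.isChain_append_cons_cons.mp hc).2.1


def blk (p n : L) (i : ℤ) : List L := List.replicate i.natAbs (if 0 ≤ i then p else n)

lemma toList_pw (p n : L) (i : ℤ) : toList (pw p n i) = blk p n i := rfl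

lemma blk_mem {p n : L} {i : ℤ} {x : L} (h : x ∈ blk p n i) : x = p ∨ x = n := by
  have := List.eq_of_mem_replicate h
  split at this
  · exact Or.inl this
  · exact Or.inr this

lemma blk_cons_pos (p n : L) (i : ℤ) (h : 0 ≤ i) : blk p n (i+1) = p :: blk p n i := by
  unfold blk
  have h1 : (i+1).natAbs = i.natAbs + 1 := by omega
  rw [if_pos (by omega), if_pos h, h1, List.replicate_succ]

lemma blk_cons_neg (p n : L) (i : ℤ) (h : i ≤ 0) : blk p n (i-1) = n :: blk p n i := by
  unfold blk
  have h1 : (i-1).natAbs = i.natAbs + 1 := by omega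
  rw [if_neg (by omega), h1, List.replicate_succ]
  rcases lt_or_eq_of_le h with h' | h'
  · rw [if_neg (by omega)]
  · subst h'; rfl

lemma blk_zero (p n : L) : blk p n 0 = [] := rfl

lemma chain'_blk (p n : L) (i : ℤ) : (blk p n i).Chain' Good := by
  unfold blk
  exact List.isChain_replicate_of_rel _ (Or.inr rfl)

lemma chain'_W (i j m : ℤ) :
    ((blk .a .A i ++ blk .b .B j) ++ blk .c .C m).Chain' Good := by
  apply List.isChain_append.mpr
  refine ⟨?_, chain'_blk _ _ _, ?_⟩
  · apply List.isChain_append.mpr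
    refine ⟨chain'_blk _ _ _, chain'_blk _ _ _, ?_⟩
    intro x hx y hy
    have hx' := blk_mem (List.mem_of_mem_getLast? hx)
    have hy' := blk_mem (List.mem_of_mem_head? hy)
    rcases hx' with rfl | rfl <;> rcases hy' with rfl | rfl <;> exact Or.inl (by decide)
  · intro x hx y hy
    have hx' := List.mem_of_mem_getLast? hx
    have hy' := blk_mem (List.mem_of_mem_head? hy)
    rw [List.mem_append] at hx'
    have : rank x ≤ 1 := by
      rcases hx' with h | h <;> rcases blk_mem h with rfl | rfl <;> decide
    have : rank y = 2 := by rcases hy' with rfl | rfl <;> decide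
    exact Or.inl (by omega)

lemma chain'_exists (l : List L) (h : l.Chain' Good) :
    ∃ i j m : ℤ, l = (blk .a .A i ++ blk .b .B j) ++ blk .c .C m := by
  induction l with
  | nil => exact ⟨0, 0, 0, rfl⟩
  | cons p rest ih =>
      obtain ⟨hgood, hrest⟩ := List.isChain_cons.mp h
      obtain ⟨i, j, m, hr⟩ := ih hrest
      -- helper: head of rest
      have hhead : ∀ y, rest.head? = some y → Good p y := fun y hy => hgood y hy
      have headA : i < 0 → rest.head? = some .A := by
        intro hi
        have : blk .a .A i = .A :: blk .a .A (i+1) := by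
          have := blk_cons_neg .a .A (i+1) (by omega)
          simpa using this
        rw [hr, this]; rfl
      have headA' : 0 < i → rest.head? = some .a := by
        intro hi
        have : blk .a .A i = .a :: blk .a .A (i-1) := by
          have := blk_cons_pos .a .A (i-1) (by omega)
          simpa using this
        rw [hr, this]; rfl
      have headB : i = 0 → j < 0 → rest.head? = some .B := by
        intro hi hj; subst hi
        have : blk .b .B j = .B :: blk .b .B (j+1) := by
          have := blk_cons_neg .b .B (j+1) (by omega)
          simpa using this
        rw [hr, blk_zero, List.nil_append, this]; rfl
      have headB' : i = 0 → 0 < j → rest.head? = some .b := by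
        intro hi hj; subst hi
        have : blk .b .B j = .b :: blk .b .B (j-1) := by
          have := blk_cons_pos .b .B (j-1) (by omega)
          simpa using this
        rw [hr, blk_zero, List.nil_append, this]; rfl
      have headC : i = 0 → j = 0 → m < 0 → rest.head? = some .C := by
        intro hi hj hm; subst hi; subst hj
        have : blk .c .C m = .C :: blk .c .C (m+1) := by
          have := blk_cons_neg .c .C (m+1) (by omega)
          simpa using this
        rw [hr, blk_zero, blk_zero, this]; rfl
      have headC' : i = 0 → j = 0 → 0 < m → rest.head? = some .c := by
        intro hi hj hm; subst hi; subst hj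
        have : blk .c .C m = .c :: blk .c .C (m-1) := by
          have := blk_cons_pos .c .C (m-1) (by omega)
          simpa using this
        rw [hr, blk_zero, blk_zero, this]; rfl
      cases p with
      | a =>
          have hi : 0 ≤ i := by
            by_contra h'
            exact absurd (hhead _ (headA (by omega))) (by decide)
          refine ⟨i+1, j, m, ?_⟩
          rw [hr, blk_cons_pos .a .A i hi]; rfl
      | A =>
          have hi : i ≤ 0 := by
            by_contra h'
            exact absurd (hhead _ (headA' (by omega))) (by decide)
          refine ⟨i-1, j, m, ?_⟩
          rw [hr, blk_cons_neg .a .A i hi]; rfl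
      | b =>
          have hi : i = 0 := by
            rcases lt_trichotomy i 0 with h' | h' | h'
            · exact absurd (hhead _ (headA h')) (by decide)
            · exact h'
            · exact absurd (hhead _ (headA' h')) (by decide)
          have hj : 0 ≤ j := by
            by_contra h'
            exact absurd (hhead _ (headB hi (by omega))) (by decide)
          refine ⟨0, j+1, m, ?_⟩
          rw [hr, hi, blk_cons_pos .b .B j hj, blk_zero]; rfl
      | B =>
          have hi : i = 0 := by
            rcases lt_trichotomy i 0 with h' | h' | h'
            · exact absurd (hhead _ (headA h')) (by decide)
            · exact h'
            · exact absurd (hhead _ (headA' h')) (by decide)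
          have hj : j ≤ 0 := by
            by_contra h'
            exact absurd (hhead _ (headB' hi (by omega))) (by decide)
          refine ⟨0, j-1, m, ?_⟩
          rw [hr, hi, blk_cons_neg .b .B j hj, blk_zero]; rfl
      | c =>
          have hi : i = 0 := by
            rcases lt_trichotomy i 0 with h' | h' | h'
            · exact absurd (hhead _ (headA h')) (by decide)
            · exact h'
            · exact absurd (hhead _ (headA' h')) (by decide)
          have hj : j = 0 := by
            rcases lt_trichotomy j 0 with h' | h' | h'
            · exact absurd (hhead _ (headB hi h')) (by decide)
            · exact h'
            · exact absurd (hhead _ (headB' hi h')) (by decide)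
          have hm : 0 ≤ m := by
            by_contra h'
            exact absurd (hhead _ (headC hi hj (by omega))) (by decide)
          refine ⟨0, 0, m+1, ?_⟩
          rw [hr, hi, hj, blk_cons_pos .c .C m hm, blk_zero, blk_zero]; rfl
      | C =>
          have hi : i = 0 := by
            rcases lt_trichotomy i 0 with h' | h' | h'
            · exact absurd (hhead _ (headA h')) (by decide)
            · exact h'
            · exact absurd (hhead _ (headA' h')) (by decide)
          have hj : j = 0 := by
            rcases lt_trichotomy j 0 with h' | h' | h'
            · exact absurd (hhead _ (headB hi h')) (by decide)
            · exact h'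
            · exact absurd (hhead _ (headB' hi h')) (by decide)
          have hm : m ≤ 0 := by
            by_contra h'
            exact absurd (hhead _ (headC' hi hj (by omega))) (by decide)
          refine ⟨0, 0, m-1, ?_⟩
          rw [hr, hi, hj, blk_cons_neg .c .C m hm, blk_zero, blk_zero]; rfl


def W (t : ℤ × ℤ × ℤ) : FM := pw .a .A t.1 * pw .b .B t.2.1 * pw .c .C t.2.2

lemma toList_W (t : ℤ × ℤ × ℤ) :
    toList (W t) = (blk .a .A t.1 ++ blk .b .B t.2.1) ++ blk .c .C t.2.2 := rfl

lemma W_irreducible (e1 e2 k : ℤ) (t : ℤ × ℤ × ℤ) :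
    RewIrreducible {p | p ∈ rulesList e1 e2 k} (W t) :=
  (irreducible_iff_chain' e1 e2 k (W t)).mpr (by rw [toList_W]; exact chain'_W _ _ _)

lemma irreducible_eq_W (e1 e2 k : ℤ) (w : FM)
    (h : RewIrreducible {p | p ∈ rulesList e1 e2 k} w) : ∃ t, w = W t := by
  obtain ⟨i, j, m, hr⟩ := chain'_exists (toList w) ((irreducible_iff_chain' e1 e2 k w).mp h)
  exact ⟨(i, j, m), toList.injective (by rw [toList_W]; exact hr)⟩

section GroupCalc
variable {H : Type*} [Group H]

lemma semiconj_zpow (y x : H) (e : ℤ) (h : y * x = x ^ e * y) (i : ℤ) :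
    y * x ^ i = x ^ (e * i) * y := by
  have h' : SemiconjBy y x (x ^ e) := h
  have := h'.zpow_right i
  unfold SemiconjBy at this
  rwa [← zpow_mul] at this

lemma inv_semiconj (y x : H) (e : ℤ) (he : e * e = 1) (h : y * x = x ^ e * y) :
    y⁻¹ * x = x ^ e * y⁻¹ := by
  have h2 := semiconj_zpow y x e h e
  rw [he, zpow_one] at h2
  -- h2 : y * x ^ e = x * y
  have h3 : x ^ e = y⁻¹ * x * y :=
    calc x ^ e = y⁻¹ * (y * x ^ e) := by group
    _ = y⁻¹ * (x * y) := by rw [h2]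
    _ = y⁻¹ * x * y := by group
  rw [h3]; group

private lemma ysucc (y : H) (j : ℤ) : y ^ (j + 1) = y * y ^ j := by
  rw [add_comm, zpow_add, zpow_one]

private lemma ypred (y : H) (j : ℤ) : y ^ (j - 1) = y⁻¹ * y ^ j := by
  rw [show j - 1 = -1 + j by ring, zpow_add, zpow_neg_one]

lemma pow_past (x y : H) (e : ℤ) (he : e * e = 1) (h : y * x = x ^ e * y) :
    ∀ j i : ℤ, ∃ m : ℤ, y ^ j * x ^ i = x ^ m * y ^ j := by
  intro j
  induction j using Int.induction_on with
  | zero => intro i; exact ⟨i, by simp⟩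
  | succ j ih =>
      intro i
      obtain ⟨m, hm⟩ := ih i
      refine ⟨e * m, ?_⟩
      calc y ^ ((j : ℤ) + 1) * x ^ i = y * (y ^ (j : ℤ) * x ^ i) := by rw [ysucc]; group
      _ = y * (x ^ m * y ^ (j : ℤ)) := by rw [hm]
      _ = (y * x ^ m) * y ^ (j : ℤ) := by group
      _ = (x ^ (e * m) * y) * y ^ (j : ℤ) := by rw [semiconj_zpow y x e h m]
      _ = x ^ (e * m) * y ^ ((j : ℤ) + 1) := by rw [ysucc]; group
  | pred j ih =>
      intro i
      obtain ⟨m, hm⟩ := ih i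
      refine ⟨e * m, ?_⟩
      have hsc := semiconj_zpow (y⁻¹) x e (inv_semiconj y x e he h) m
      calc y ^ (-(j : ℤ) - 1) * x ^ i = y⁻¹ * (y ^ (-(j : ℤ)) * x ^ i) := by rw [ypred]; group
      _ = y⁻¹ * (x ^ m * y ^ (-(j : ℤ))) := by rw [hm]
      _ = (y⁻¹ * x ^ m) * y ^ (-(j : ℤ)) := by group
      _ = (x ^ (e * m) * y⁻¹) * y ^ (-(j : ℤ)) := by rw [hsc]
      _ = x ^ (e * m) * y ^ (-(j : ℤ) - 1) := by rw [ypred]; group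

lemma z_past_y (x y z : H) (e : ℤ) (he : e * e = 1) (hxy : y * x = x ^ e * y)
    (hzy : ∃ m : ℤ, z * y = x ^ m * y * z) :
    ∀ j : ℤ, ∃ m : ℤ, z * y ^ j = x ^ m * y ^ j * z := by
  obtain ⟨k0, hk0⟩ := hzy
  have hinv : ∃ m : ℤ, z * y⁻¹ = x ^ m * y⁻¹ * z := by
    have h1 : y * z * y⁻¹ = (x ^ k0)⁻¹ * z :=
      calc y * z * y⁻¹ = (x ^ k0)⁻¹ * (x ^ k0 * y * z) * y⁻¹ := by group
      _ = (x ^ k0)⁻¹ * (z * y) * y⁻¹ := by rw [← hk0]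
      _ = (x ^ k0)⁻¹ * z := by group
    obtain ⟨m, hm⟩ := pow_past x y e he hxy (-1) (-k0)
    refine ⟨m, ?_⟩
    calc z * y⁻¹ = y⁻¹ * (y * z * y⁻¹) := by group
    _ = y⁻¹ * ((x ^ k0)⁻¹ * z) := by rw [h1]
    _ = (y ^ (-1 : ℤ) * x ^ (-k0)) * z := by rw [zpow_neg_one]; group
    _ = (x ^ m * y ^ (-1 : ℤ)) * z := by rw [hm]
    _ = x ^ m * y⁻¹ * z := by rw [zpow_neg_one]
  intro j
  induction j using Int.induction_on with
  | zero => exact ⟨0, by simp⟩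
  | succ j ih =>
      obtain ⟨m, hm⟩ := ih
      obtain ⟨m2, hm2⟩ := pow_past x y e he hxy j k0
      refine ⟨m + m2, ?_⟩
      calc z * y ^ ((j : ℤ) + 1) = (z * y ^ (j : ℤ)) * y := by rw [zpow_add_one]; group
      _ = x ^ m * y ^ (j : ℤ) * z * y := by rw [hm]
      _ = x ^ m * y ^ (j : ℤ) * (x ^ k0 * y * z) := by rw [mul_assoc _ z y, hk0]
      _ = x ^ m * (y ^ (j : ℤ) * x ^ k0) * (y * z) := by group
      _ = x ^ m * (x ^ m2 * y ^ (j : ℤ)) * (y * z) := by rw [hm2]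
      _ = x ^ (m + m2) * y ^ ((j : ℤ) + 1) * z := by rw [zpow_add_one, zpow_add]; group
  | pred j ih =>
      obtain ⟨m, hm⟩ := ih
      obtain ⟨m0, hm0⟩ := hinv
      obtain ⟨m2, hm2⟩ := pow_past x y e he hxy (-(j : ℤ)) m0
      refine ⟨m + m2, ?_⟩
      calc z * y ^ (-(j : ℤ) - 1) = (z * y ^ (-(j : ℤ))) * y⁻¹ := by
            rw [sub_eq_add_neg, zpow_add, zpow_neg_one]; group
      _ = x ^ m * y ^ (-(j : ℤ)) * (z * y⁻¹) := by rw [hm]; group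
      _ = x ^ m * y ^ (-(j : ℤ)) * (x ^ m0 * y⁻¹ * z) := by rw [hm0]
      _ = x ^ m * (y ^ (-(j : ℤ)) * x ^ m0) * (y⁻¹ * z) := by group
      _ = x ^ m * (x ^ m2 * y ^ (-(j : ℤ))) * (y⁻¹ * z) := by rw [hm2]
      _ = x ^ (m + m2) * y ^ (-(j : ℤ) - 1) * z := by
            rw [sub_eq_add_neg, zpow_add, zpow_add]; group

end GroupCalc


lemma ofList_replicate (l : L) (m : ℕ) :
    ofList (List.replicate m l) = (of l) ^ m := by
  induction m with
  | zero => rfl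
  | succ m ih => rw [List.replicate_succ, ofList_cons, ih, pow_succ']

section Quot
variable (e1 e2 k : ℤ)

def rcon : Con FM := conGen (fun w w' => (w, w') ∈ {p : FM × FM | p ∈ rulesList e1 e2 k})

def mkQ : FM →* (rcon e1 e2 k).Quotient := (rcon e1 e2 k).mk'

lemma mk_rule {u v : FM} (h : (u, v) ∈ rulesList e1 e2 k) : mkQ e1 e2 k u = mkQ e1 e2 k v := by
  have : (rcon e1 e2 k) u v := ConGen.Rel.of _ _ h
  exact ((rcon e1 e2 k).eq).mpr this

def ua : (rcon e1 e2 k).Quotientˣ where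
  val := mkQ e1 e2 k (of .a)
  inv := mkQ e1 e2 k (of .A)
  val_inv := by
    rw [← map_mul]
    exact (mk_rule e1 e2 k (u := of .a * of .A) (v := 1)
      (by simp only [rulesList, List.mem_cons]; tauto)).trans (map_one _)
  inv_val := by
    rw [← map_mul]
    exact (mk_rule e1 e2 k (u := of .A * of .a) (v := 1)
      (by simp only [rulesList, List.mem_cons]; tauto)).trans (map_one _)

def ub : (rcon e1 e2 k).Quotientˣ where
  val := mkQ e1 e2 k (of .b)
  inv := mkQ e1 e2 k (of .B)
  val_inv := by
    rw [← map_mul]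
    exact (mk_rule e1 e2 k (u := of .b * of .B) (v := 1)
      (by simp only [rulesList, List.mem_cons]; tauto)).trans (map_one _)
  inv_val := by
    rw [← map_mul]
    exact (mk_rule e1 e2 k (u := of .B * of .b) (v := 1)
      (by simp only [rulesList, List.mem_cons]; tauto)).trans (map_one _)

def uc : (rcon e1 e2 k).Quotientˣ where
  val := mkQ e1 e2 k (of .c)
  inv := mkQ e1 e2 k (of .C)
  val_inv := by
    rw [← map_mul]
    exact (mk_rule e1 e2 k (u := of .c * of .C) (v := 1)
      (by simp only [rulesList, List.mem_cons]; tauto)).trans (map_one _)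
  inv_val := by
    rw [← map_mul]
    exact (mk_rule e1 e2 k (u := of .C * of .c) (v := 1)
      (by simp only [rulesList, List.mem_cons]; tauto)).trans (map_one _)

lemma mk_pw (p n : L) (i : ℤ) (u : (rcon e1 e2 k).Quotientˣ)
    (hp : (u : (rcon e1 e2 k).Quotient) = mkQ e1 e2 k (of p))
    (hn : ((u⁻¹ : _ˣ) : (rcon e1 e2 k).Quotient) = mkQ e1 e2 k (of n)) :
    mkQ e1 e2 k (pw p n i) = ((u ^ i : _ˣ) : (rcon e1 e2 k).Quotient) := by
  unfold pw
  split_ifs with h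
  · rw [ofList_replicate, map_pow, ← hp, ← Units.val_pow_eq_pow_val,
      show u ^ i.natAbs = u ^ i by rw [← zpow_natCast, Int.natAbs_of_nonneg h]]
  · rw [ofList_replicate, map_pow, ← hn, ← Units.val_pow_eq_pow_val,
      show (u⁻¹) ^ i.natAbs = u ^ i by
        rw [← zpow_natCast, inv_zpow, ← zpow_neg]; congr 1; omega]

lemma mk_W (t : ℤ × ℤ × ℤ) :
    mkQ e1 e2 k (W t) =
      ((ua e1 e2 k ^ t.1 * ub e1 e2 k ^ t.2.1 * uc e1 e2 k ^ t.2.2 : _ˣ) :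
        (rcon e1 e2 k).Quotient) := by
  unfold W
  rw [map_mul, map_mul,
    mk_pw e1 e2 k .a .A t.1 (ua e1 e2 k) rfl rfl,
    mk_pw e1 e2 k .b .B t.2.1 (ub e1 e2 k) rfl rfl,
    mk_pw e1 e2 k .c .C t.2.2 (uc e1 e2 k) rfl rfl,
    Units.val_mul, Units.val_mul]


lemma rel_ba : ub e1 e2 k * ua e1 e2 k = ua e1 e2 k ^ e1 * ub e1 e2 k := by
  apply Units.ext
  rw [Units.val_mul, Units.val_mul, ← mk_pw e1 e2 k .a .A e1 (ua e1 e2 k) rfl rfl]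
  show mkQ e1 e2 k (of .b) * mkQ e1 e2 k (of .a) = _ * mkQ e1 e2 k (of .b)
  rw [← map_mul, ← map_mul]
  exact mk_rule e1 e2 k (by show _ ∈ _; simp only [rulesList, List.mem_cons]; tauto)

lemma rel_Ba : (ub e1 e2 k)⁻¹ * ua e1 e2 k = ua e1 e2 k ^ e1 * (ub e1 e2 k)⁻¹ := by
  apply Units.ext
  rw [Units.val_mul, Units.val_mul, ← mk_pw e1 e2 k .a .A e1 (ua e1 e2 k) rfl rfl]
  show mkQ e1 e2 k (of .B) * mkQ e1 e2 k (of .a) = _ * mkQ e1 e2 k (of .B)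
  rw [← map_mul, ← map_mul]
  exact mk_rule e1 e2 k (by show _ ∈ _; simp only [rulesList, List.mem_cons]; tauto)

lemma rel_ca : uc e1 e2 k * ua e1 e2 k = ua e1 e2 k ^ e2 * uc e1 e2 k := by
  apply Units.ext
  rw [Units.val_mul, Units.val_mul, ← mk_pw e1 e2 k .a .A e2 (ua e1 e2 k) rfl rfl]
  show mkQ e1 e2 k (of .c) * mkQ e1 e2 k (of .a) = _ * mkQ e1 e2 k (of .c)
  rw [← map_mul, ← map_mul]
  exact mk_rule e1 e2 k (by show _ ∈ _; simp only [rulesList, List.mem_cons]; tauto)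

lemma rel_Ca : (uc e1 e2 k)⁻¹ * ua e1 e2 k = ua e1 e2 k ^ e2 * (uc e1 e2 k)⁻¹ := by
  apply Units.ext
  rw [Units.val_mul, Units.val_mul, ← mk_pw e1 e2 k .a .A e2 (ua e1 e2 k) rfl rfl]
  show mkQ e1 e2 k (of .C) * mkQ e1 e2 k (of .a) = _ * mkQ e1 e2 k (of .C)
  rw [← map_mul, ← map_mul]
  exact mk_rule e1 e2 k (by show _ ∈ _; simp only [rulesList, List.mem_cons]; tauto)

lemma rel_cb : uc e1 e2 k * ub e1 e2 k = ua e1 e2 k ^ k * ub e1 e2 k * uc e1 e2 k := by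
  apply Units.ext
  rw [Units.val_mul, Units.val_mul, Units.val_mul,
    ← mk_pw e1 e2 k .a .A k (ua e1 e2 k) rfl rfl]
  show mkQ e1 e2 k (of .c) * mkQ e1 e2 k (of .b) =
    _ * mkQ e1 e2 k (of .b) * mkQ e1 e2 k (of .c)
  rw [← map_mul, ← map_mul, ← map_mul, mul_assoc]
  exact mk_rule e1 e2 k (by show _ ∈ _; simp only [rulesList, List.mem_cons]; tauto)

lemma rel_Cb : (uc e1 e2 k)⁻¹ * ub e1 e2 k =
    ua e1 e2 k ^ (-(e2*k)) * ub e1 e2 k * (uc e1 e2 k)⁻¹ := by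
  apply Units.ext
  rw [Units.val_mul, Units.val_mul, Units.val_mul,
    ← mk_pw e1 e2 k .a .A (-(e2*k)) (ua e1 e2 k) rfl rfl]
  show mkQ e1 e2 k (of .C) * mkQ e1 e2 k (of .b) =
    _ * mkQ e1 e2 k (of .b) * mkQ e1 e2 k (of .C)
  rw [← map_mul, ← map_mul, ← map_mul, mul_assoc]
  exact mk_rule e1 e2 k (by show _ ∈ _; simp only [rulesList, List.mem_cons]; tauto)

end Quot

section Letter

/-- one letter times a normal form is again a normal form, abstractly in a group -/
lemma letter_step {H : Type*} [Group H] (x y z g : H) (e1 e2 k : ℤ)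
    (he1 : e1 * e1 = 1) (he2 : e2 * e2 = 1)
    (r7 : y * x = x ^ e1 * y) (r9 : y⁻¹ * x = x ^ e1 * y⁻¹)
    (r11 : z * x = x ^ e2 * z) (r13 : z⁻¹ * x = x ^ e2 * z⁻¹)
    (r15 : z * y = x ^ k * y * z) (r17 : z⁻¹ * y = x ^ (-(e2*k)) * y * z⁻¹)
    (hg : g = x ∨ g = x⁻¹ ∨ g = y ∨ g = y⁻¹ ∨ g = z ∨ g = z⁻¹) (i j m : ℤ) :
    ∃ i' j' m' : ℤ, g * (x ^ i * y ^ j * z ^ m) = x ^ i' * y ^ j' * z ^ m' := by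
  rcases hg with hgg | hgg | hgg | hgg | hgg | hgg <;> rw [hgg]
  · exact ⟨1 + i, j, m, by rw [zpow_add, zpow_one]; group⟩
  · exact ⟨-1 + i, j, m, by rw [zpow_add, zpow_neg_one]; group⟩
  · refine ⟨e1 * i, 1 + j, m, ?_⟩
    have h := semiconj_zpow y x e1 r7 i
    calc y * (x ^ i * y ^ j * z ^ m) = (y * x ^ i) * y ^ j * z ^ m := by group
    _ = (x ^ (e1 * i) * y) * y ^ j * z ^ m := by rw [h]
    _ = x ^ (e1 * i) * y ^ (1 + j) * z ^ m := by rw [zpow_add, zpow_one]; group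
  · refine ⟨e1 * i, -1 + j, m, ?_⟩
    have h := semiconj_zpow (y⁻¹) x e1 r9 i
    calc y⁻¹ * (x ^ i * y ^ j * z ^ m) = (y⁻¹ * x ^ i) * y ^ j * z ^ m := by group
    _ = (x ^ (e1 * i) * y⁻¹) * y ^ j * z ^ m := by rw [h]
    _ = x ^ (e1 * i) * y ^ (-1 + j) * z ^ m := by rw [zpow_add, zpow_neg_one]; group
  · obtain ⟨m', h'⟩ := z_past_y x y z e1 he1 r7 ⟨k, r15⟩ j
    refine ⟨e2 * i + m', j, 1 + m, ?_⟩
    have h := semiconj_zpow z x e2 r11 i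
    calc z * (x ^ i * y ^ j * z ^ m) = (z * x ^ i) * (y ^ j * z ^ m) := by group
    _ = (x ^ (e2 * i) * z) * (y ^ j * z ^ m) := by rw [h]
    _ = x ^ (e2 * i) * (z * y ^ j) * z ^ m := by group
    _ = x ^ (e2 * i) * (x ^ m' * y ^ j * z) * z ^ m := by rw [h']
    _ = x ^ (e2 * i + m') * y ^ j * z ^ (1 + m) := by rw [zpow_add, zpow_add, zpow_one]; group
  · obtain ⟨m', h'⟩ := z_past_y x y (z⁻¹) e1 he1 r7 ⟨-(e2*k), r17⟩ j
    refine ⟨e2 * i + m', j, -1 + m, ?_⟩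
    have h := semiconj_zpow (z⁻¹) x e2 r13 i
    calc z⁻¹ * (x ^ i * y ^ j * z ^ m) = (z⁻¹ * x ^ i) * (y ^ j * z ^ m) := by group
    _ = (x ^ (e2 * i) * z⁻¹) * (y ^ j * z ^ m) := by rw [h]
    _ = x ^ (e2 * i) * (z⁻¹ * y ^ j) * z ^ m := by group
    _ = x ^ (e2 * i) * (x ^ m' * y ^ j * z⁻¹) * z ^ m := by rw [h']
    _ = x ^ (e2 * i + m') * y ^ j * z ^ (-1 + m) := by
          rw [zpow_add, zpow_add, zpow_neg_one]; group

end Letter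

section Reach
variable (e1 e2 k : ℤ)

lemma mk_of_eq_unit (l : L) :
    ∃ g : (rcon e1 e2 k).Quotientˣ,
      mkQ e1 e2 k (of l) = (g : (rcon e1 e2 k).Quotient) ∧
      (g = ua e1 e2 k ∨ g = (ua e1 e2 k)⁻¹ ∨ g = ub e1 e2 k ∨ g = (ub e1 e2 k)⁻¹ ∨
        g = uc e1 e2 k ∨ g = (uc e1 e2 k)⁻¹) := by
  cases l with
  | a => exact ⟨ua e1 e2 k, rfl, by tauto⟩
  | A => exact ⟨(ua e1 e2 k)⁻¹, rfl, by tauto⟩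
  | b => exact ⟨ub e1 e2 k, rfl, by tauto⟩
  | B => exact ⟨(ub e1 e2 k)⁻¹, rfl, by tauto⟩
  | c => exact ⟨uc e1 e2 k, rfl, by tauto⟩
  | C => exact ⟨(uc e1 e2 k)⁻¹, rfl, by tauto⟩

lemma reach (he1 : e1 = 1 ∨ e1 = -1) (he2 : e2 = 1 ∨ e2 = -1) (w : FM) :
    ∃ t, mkQ e1 e2 k w = mkQ e1 e2 k (W t) := by
  have he1' : e1 * e1 = 1 := by rcases he1 with h | h <;> rw [h] <;> norm_num
  have he2' : e2 * e2 = 1 := by rcases he2 with h | h <;> rw [h] <;> norm_num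
  induction w using FreeMonoid.inductionOn' with
  | one => exact ⟨(0, 0, 0), rfl⟩
  | of_mul l w ih =>
      obtain ⟨⟨i, j, m⟩, ht⟩ := ih
      obtain ⟨g, hgl, hg⟩ := mk_of_eq_unit e1 e2 k l
      obtain ⟨i', j', m', hstep⟩ := letter_step (ua e1 e2 k) (ub e1 e2 k) (uc e1 e2 k) g
        e1 e2 k he1' he2' (rel_ba e1 e2 k) (rel_Ba e1 e2 k) (rel_ca e1 e2 k) (rel_Ca e1 e2 k)
        (rel_cb e1 e2 k) (rel_Cb e1 e2 k) hg i j m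
      refine ⟨(i', j', m'), ?_⟩
      rw [map_mul, ht, mk_W, mk_W, hgl, ← Units.val_mul]
      exact congrArg Units.val hstep

end Reach

section GroupCalc2
variable {H : Type*} [Group H]

/-- move an inverse generator past `y⁻¹` -/
lemma swap_inv (x y w : H) (e1 m0 : ℤ) (he : e1 * e1 = 1)
    (hyx : y * x = x ^ e1 * y) (hwy : w * y = x ^ m0 * y * w) :
    w * y⁻¹ = x ^ (e1 * -m0) * y⁻¹ * w := by
  have h1 : y * w * y⁻¹ = x ^ (-m0) * w :=
    calc y * w * y⁻¹ = (x ^ m0)⁻¹ * (x ^ m0 * y * w) * y⁻¹ := by group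
    _ = (x ^ m0)⁻¹ * (w * y) * y⁻¹ := by rw [← hwy]
    _ = x ^ (-m0) * w := by rw [zpow_neg]; group
  have h2 := semiconj_zpow (y⁻¹) x e1 (inv_semiconj y x e1 he hyx) (-m0)
  calc w * y⁻¹ = y⁻¹ * (y * w * y⁻¹) := by group
  _ = y⁻¹ * (x ^ (-m0) * w) := by rw [h1]
  _ = (y⁻¹ * x ^ (-m0)) * w := by group
  _ = (x ^ (e1 * -m0) * y⁻¹) * w := by rw [h2]
  _ = x ^ (e1 * -m0) * y⁻¹ * w := by group

/-- move `z⁻¹` past `y` -/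
lemma swap_zinv (x y z : H) (e2 kk : ℤ) (he : e2 * e2 = 1)
    (hzx : z * x = x ^ e2 * z) (hzy : z * y = x ^ kk * y * z) :
    z⁻¹ * y = x ^ (-(e2 * kk)) * y * z⁻¹ := by
  have h2 := semiconj_zpow (z⁻¹) x e2 (inv_semiconj z x e2 he hzx) (-kk)
  have h1 : y * z = x ^ (-kk) * (z * y) := by rw [hzy, zpow_neg]; group
  calc z⁻¹ * y = z⁻¹ * (y * z) * z⁻¹ := by group
  _ = z⁻¹ * (x ^ (-kk) * (z * y)) * z⁻¹ := by rw [h1]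
  _ = (z⁻¹ * x ^ (-kk)) * (z * y) * z⁻¹ := by group
  _ = (x ^ (e2 * -kk) * z⁻¹) * (z * y) * z⁻¹ := by rw [h2]
  _ = x ^ (e2 * -kk) * y * z⁻¹ := by group
  _ = x ^ (-(e2 * kk)) * y * z⁻¹ := by rw [show e2 * -kk = -(e2 * kk) by ring]

end GroupCalc2

section Main
variable {G : Type} [Group G] (N : Subgroup G) [N.Normal] (e₁ : N ≃* Multiplicative ℤ)

def aG : G := ((e₁.symm (Multiplicative.ofAdd 1) : N) : G)

lemma aG_mem : aG N e₁ ∈ N := (e₁.symm (Multiplicative.ofAdd 1)).2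

lemma aG_zpow (i : ℤ) : aG N e₁ ^ i = ((e₁.symm (Multiplicative.ofAdd i) : N) : G) := by
  rw [aG, ← SubgroupClass.coe_zpow, ← map_zpow]
  congr 2
  rw [← ofAdd_zsmul]
  congr 1
  simp

lemma aG_zpow_inj (i j : ℤ) (h : aG N e₁ ^ i = aG N e₁ ^ j) : i = j := by
  rw [aG_zpow, aG_zpow] at h
  have h2 := e₁.symm.injective (Subtype.coe_injective h)
  exact Multiplicative.ofAdd.injective h2

lemma mem_N_iff (g : G) (h : g ∈ N) : ∃ i : ℤ, g = aG N e₁ ^ i := by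
  refine ⟨Multiplicative.toAdd (e₁ ⟨g, h⟩), ?_⟩
  rw [aG_zpow]
  simp

lemma conj_aG (x : G) : ∃ e : ℤ, (e = 1 ∨ e = -1) ∧ x * aG N e₁ * x⁻¹ = aG N e₁ ^ e := by
  obtain ⟨s, hs⟩ := mem_N_iff N e₁ (x * aG N e₁ * x⁻¹)
    (Subgroup.Normal.conj_mem ‹N.Normal› _ (aG_mem N e₁) x)
  obtain ⟨t, ht⟩ := mem_N_iff N e₁ (x⁻¹ * aG N e₁ * x)
    (by simpa using Subgroup.Normal.conj_mem ‹N.Normal› _ (aG_mem N e₁) x⁻¹)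
  have key : aG N e₁ ^ (1 : ℤ) = aG N e₁ ^ (t * s) := by
    have h1 : aG N e₁ = x⁻¹ * (x * aG N e₁ * x⁻¹) * x := by group
    rw [zpow_one]
    calc aG N e₁ = x⁻¹ * (x * aG N e₁ * x⁻¹) * x := h1
    _ = x⁻¹ * aG N e₁ ^ s * x := by rw [← hs]
    _ = (x⁻¹ * aG N e₁ * x) ^ s := by
          rw [show x⁻¹ * aG N e₁ * x = (MulAut.conj x⁻¹) (aG N e₁) by simp [MulAut.conj],
            ← map_zpow]
          simp [MulAut.conj]
    _ = (aG N e₁ ^ t) ^ s := by rw [← ht]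
    _ = aG N e₁ ^ (t * s) := by rw [← zpow_mul]
  have hts : t * s = 1 := (aG_zpow_inj N e₁ _ _ key).symm
  have : IsUnit s := IsUnit.of_mul_eq_one t (by linarith [hts, mul_comm t s] )
  exact ⟨s, Int.isUnit_iff.mp this, hs⟩

end Main

section Main2
variable {G : Type} [Group G] (N : Subgroup G) [N.Normal] (e₁ : N ≃* Multiplicative ℤ)
  (e₂ : G ⧸ N ≃* Multiplicative (ℤ × ℤ))

noncomputable def bG : G := (e₂.symm (Multiplicative.ofAdd (1, 0))).out
noncomputable def cG : G := (e₂.symm (Multiplicative.ofAdd (0, 1))).out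

lemma mk_bG : e₂ (QuotientGroup.mk (bG N e₂)) = Multiplicative.ofAdd (1, 0) := by
  rw [bG, QuotientGroup.out_eq']; simp

lemma mk_cG : e₂ (QuotientGroup.mk (cG N e₂)) = Multiplicative.ofAdd (0, 1) := by
  rw [cG, QuotientGroup.out_eq']; simp

lemma mk_NF (j m : ℤ) :
    e₂ (QuotientGroup.mk (bG N e₂ ^ j * cG N e₂ ^ m)) = Multiplicative.ofAdd (j, m) := by
  have : QuotientGroup.mk (s := N) (bG N e₂ ^ j * cG N e₂ ^ m) =
      (QuotientGroup.mk (bG N e₂) : G ⧸ N) ^ j * (QuotientGroup.mk (cG N e₂) : G ⧸ N) ^ m := by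
    rw [QuotientGroup.mk_mul, QuotientGroup.mk_zpow, QuotientGroup.mk_zpow]
  rw [this, map_mul, map_zpow, map_zpow, mk_bG, mk_cG, ← ofAdd_zsmul, ← ofAdd_zsmul, ← ofAdd_add]
  congr 1
  simp [Prod.ext_iff]

lemma NF_inj (t t' : ℤ × ℤ × ℤ)
    (h : aG N e₁ ^ t.1 * bG N e₂ ^ t.2.1 * cG N e₂ ^ t.2.2 =
         aG N e₁ ^ t'.1 * bG N e₂ ^ t'.2.1 * cG N e₂ ^ t'.2.2) : t = t' := by
  obtain ⟨i, j, m⟩ := t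
  obtain ⟨i', j', m'⟩ := t'
  simp only at h
  have hmk : QuotientGroup.mk (s := N) (aG N e₁ ^ i * (bG N e₂ ^ j * cG N e₂ ^ m)) =
      QuotientGroup.mk (s := N) (aG N e₁ ^ i' * (bG N e₂ ^ j' * cG N e₂ ^ m')) := by
    rw [← mul_assoc, ← mul_assoc, h]
  simp only [QuotientGroup.mk_mul] at hmk
  have ha : ∀ i : ℤ, (QuotientGroup.mk (aG N e₁ ^ i) : G ⧸ N) = 1 := by
    intro i
    rw [QuotientGroup.eq_one_iff]
    exact Subgroup.zpow_mem N (aG_mem N e₁) i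
  rw [ha, ha, one_mul, one_mul] at hmk
  have h2 : Multiplicative.ofAdd (j, m) = Multiplicative.ofAdd (j', m') := by
    rw [← mk_NF N e₂, ← mk_NF N e₂]
    simp only [QuotientGroup.mk_mul]
    rw [hmk]
  have h3 : (j, m) = (j', m') := Multiplicative.ofAdd.injective h2
  obtain ⟨rfl, rfl⟩ : j = j' ∧ m = m' := by
    constructor <;> [exact congrArg Prod.fst h3; exact congrArg Prod.snd h3]
  have h4 : aG N e₁ ^ i = aG N e₁ ^ i' := by
    apply mul_right_cancel (b := bG N e₂ ^ j)
    apply mul_right_cancel (b := cG N e₂ ^ m)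
    exact h
  rw [aG_zpow_inj N e₁ i i' h4]

lemma NF_surj (g : G) : ∃ t : ℤ × ℤ × ℤ,
    g = aG N e₁ ^ t.1 * bG N e₂ ^ t.2.1 * cG N e₂ ^ t.2.2 := by
  set p := Multiplicative.toAdd (e₂ (QuotientGroup.mk g)) with hp
  have hmk : QuotientGroup.mk (s := N) (bG N e₂ ^ p.1 * cG N e₂ ^ p.2) =
      QuotientGroup.mk (s := N) g := by
    apply e₂.injective
    rw [mk_NF N e₂]
    simp [hp]
  have hmem : g * (bG N e₂ ^ p.1 * cG N e₂ ^ p.2)⁻¹ ∈ N := by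
    rw [← QuotientGroup.eq_one_iff]
    rw [QuotientGroup.mk_mul, QuotientGroup.mk_inv, hmk]
    simp
  obtain ⟨i, hi⟩ := mem_N_iff N e₁ _ hmem
  refine ⟨(i, p.1, p.2), ?_⟩
  have : g = (g * (bG N e₂ ^ p.1 * cG N e₂ ^ p.2)⁻¹) * (bG N e₂ ^ p.1 * cG N e₂ ^ p.2) := by
    group
  rw [this, hi, ← mul_assoc]

end Main2

section Lift
variable {G : Type} [Group G]

def piL (a b c : G) : L → G
  | .a => a | .A => a⁻¹ | .b => b | .B => b⁻¹ | .c => c | .C => c⁻¹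

lemma lift_pw (f : L → G) (p n : L) (hn : f n = (f p)⁻¹) (i : ℤ) :
    FreeMonoid.lift f (pw p n i) = f p ^ i := by
  unfold pw
  split_ifs with h
  · rw [ofList_replicate, map_pow, FreeMonoid.lift_eval_of, ← zpow_natCast]
    congr 1; omega
  · rw [ofList_replicate, map_pow, FreeMonoid.lift_eval_of, hn, inv_pow, ← zpow_natCast,
      ← zpow_neg]
    congr 1; omega

lemma lift_W (a b c : G) (t : ℤ × ℤ × ℤ) :
    FreeMonoid.lift (piL a b c) (W t) = a ^ t.1 * b ^ t.2.1 * c ^ t.2.2 := by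
  unfold W
  rw [map_mul, map_mul, lift_pw (piL a b c) .a .A rfl, lift_pw (piL a b c) .b .B rfl,
    lift_pw (piL a b c) .c .C rfl]
  rfl

lemma rules_sound (a b c : G) (e1 e2 k : ℤ) (he1 : e1 * e1 = 1) (he2 : e2 * e2 = 1)
    (g7 : b * a = a ^ e1 * b) (g11 : c * a = a ^ e2 * c) (g15 : c * b = a ^ k * b * c)
    (u v : FM) (h : (u, v) ∈ rulesList e1 e2 k) :
    FreeMonoid.lift (piL a b c) u = FreeMonoid.lift (piL a b c) v := by
  have g9 : b⁻¹ * a = a ^ e1 * b⁻¹ := inv_semiconj b a e1 he1 g7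
  have g13 : c⁻¹ * a = a ^ e2 * c⁻¹ := inv_semiconj c a e2 he2 g11
  have pow1 : ∀ x : G, x ^ (-1 : ℤ) = x⁻¹ := fun x => zpow_neg_one x
  simp only [rulesList, List.mem_cons, List.not_mem_nil, or_false, Prod.mk.injEq] at h
  rcases h with ⟨rfl,rfl⟩|⟨rfl,rfl⟩|⟨rfl,rfl⟩|⟨rfl,rfl⟩|⟨rfl,rfl⟩|⟨rfl,rfl⟩|⟨rfl,rfl⟩|⟨rfl,rfl⟩|
    ⟨rfl,rfl⟩|⟨rfl,rfl⟩|⟨rfl,rfl⟩|⟨rfl,rfl⟩|⟨rfl,rfl⟩|⟨rfl,rfl⟩|⟨rfl,rfl⟩|⟨rfl,rfl⟩|⟨rfl,rfl⟩|⟨rfl,rfl⟩ <;>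
    simp only [map_mul, map_one, FreeMonoid.lift_eval_of,
      lift_pw (piL a b c) .a .A rfl, piL]
  · exact mul_inv_cancel a
  · exact inv_mul_cancel a
  · exact mul_inv_cancel b
  · exact inv_mul_cancel b
  · exact mul_inv_cancel c
  · exact inv_mul_cancel c
  · exact g7
  · have := semiconj_zpow b a e1 g7 (-1)
    rw [pow1] at this
    rw [this]
    congr 1
    rw [show e1 * -1 = -e1 by ring]
  · exact g9
  · have := semiconj_zpow (b⁻¹) a e1 g9 (-1)
    rw [pow1] at this
    rw [this]
    congr 1
    rw [show e1 * -1 = -e1 by ring]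
  · exact g11
  · have := semiconj_zpow c a e2 g11 (-1)
    rw [pow1] at this
    rw [this]
    congr 1
    rw [show e2 * -1 = -e2 by ring]
  · exact g13
  · have := semiconj_zpow (c⁻¹) a e2 g13 (-1)
    rw [pow1] at this
    rw [this]
    congr 1
    rw [show e2 * -1 = -e2 by ring]
  · rw [← mul_assoc]; exact g15
  · have := swap_inv a b c e1 k he1 g7 g15
    rw [← mul_assoc, this]
    congr 2
    rw [show -(e1 * k) = e1 * -k by ring]
  · have := swap_zinv a b c e2 k he2 g11 g15
    rw [← mul_assoc, this]
  · have h17 := swap_zinv a b c e2 k he2 g11 g15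
    have := swap_inv a b (c⁻¹) e1 (-(e2 * k)) he1 g7 h17
    rw [← mul_assoc, this]
    congr 2
    rw [show e1 * e2 * k = e1 * - -(e2 * k) by ring]

end Lift
end NilCRS



open NilCRS in
/-- If G has a normal subgroup N ≅ ℤ with G/N ≅ ℤ², then G has a
finite complete rewriting system (the Nil-geometry case). -/
theorem nilCase_hasFiniteCompleteRewritingSystem
    (G : Type) [Group G] (N : Subgroup G) [N.Normal]
    (e₁ : N ≃* Multiplicative ℤ)
    (e₂ : G ⧸ N ≃* Multiplicative (ℤ × ℤ)) :
    HasFiniteCompleteRewritingSystem G := by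
  classical
  obtain ⟨e1, he1, hb⟩ := conj_aG N e₁ (bG N e₂)
  obtain ⟨e2, he2, hc⟩ := conj_aG N e₁ (cG N e₂)
  have he1' : e1 * e1 = 1 := by rcases he1 with h | h <;> rw [h] <;> norm_num
  have he2' : e2 * e2 = 1 := by rcases he2 with h | h <;> rw [h] <;> norm_num
  have hcommN : cG N e₂ * bG N e₂ * (cG N e₂)⁻¹ * (bG N e₂)⁻¹ ∈ N := by
    rw [← QuotientGroup.eq_one_iff]
    apply e₂.injective
    rw [map_one]
    have hsplit : QuotientGroup.mk (s := N)
        (cG N e₂ * bG N e₂ * (cG N e₂)⁻¹ * (bG N e₂)⁻¹) =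
        (QuotientGroup.mk (cG N e₂) : G ⧸ N) * QuotientGroup.mk (bG N e₂) *
          (QuotientGroup.mk (cG N e₂) : G ⧸ N)⁻¹ * (QuotientGroup.mk (bG N e₂) : G ⧸ N)⁻¹ := by
      rfl
    rw [hsplit, map_mul, map_mul, map_mul, map_inv, map_inv]
    generalize e₂ (QuotientGroup.mk (cG N e₂)) = X
    generalize e₂ (QuotientGroup.mk (bG N e₂)) = Y
    rw [mul_comm X Y]
    group
  obtain ⟨k, hk⟩ := mem_N_iff N e₁ _ hcommN
  have g7 : bG N e₂ * aG N e₁ = aG N e₁ ^ e1 * bG N e₂ := by rw [← hb]; group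
  have g11 : cG N e₂ * aG N e₁ = aG N e₁ ^ e2 * cG N e₂ := by rw [← hc]; group
  have g15 : cG N e₂ * bG N e₂ = aG N e₁ ^ k * bG N e₂ * cG N e₂ := by rw [← hk]; group
  refine ⟨L, inferInstance, piL (aG N e₁) (bG N e₂) (cG N e₂),
    {p | p ∈ rulesList e1 e2 k}, (rulesList e1 e2 k).finite_toSet, ?_, ?_, ?_, ?_⟩
  · -- surjectivity
    intro g
    obtain ⟨t, ht⟩ := NF_surj N e₁ e₂ g
    exact ⟨W t, by rw [lift_W]; exact ht.symm⟩
  · -- the congruence is the kernel congruence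
    intro u v
    have hle : rcon e1 e2 k ≤ Con.ker (FreeMonoid.lift (piL (aG N e₁) (bG N e₂) (cG N e₂))) :=
      Con.conGen_le.2 (fun u v h => (Con.ker_rel _).mpr
        (rules_sound (aG N e₁) (bG N e₂) (cG N e₂) e1 e2 k he1' he2' g7 g11 g15 u v h))
    constructor
    · intro h
      obtain ⟨t, ht⟩ := reach e1 e2 k he1 he2 u
      obtain ⟨t', ht'⟩ := reach e1 e2 k he1 he2 v
      have hu : FreeMonoid.lift (piL (aG N e₁) (bG N e₂) (cG N e₂)) u =
          FreeMonoid.lift (piL (aG N e₁) (bG N e₂) (cG N e₂)) (W t) :=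
        (Con.ker_rel _).mp (hle ((Con.eq _).mp ht))
      have hv : FreeMonoid.lift (piL (aG N e₁) (bG N e₂) (cG N e₂)) v =
          FreeMonoid.lift (piL (aG N e₁) (bG N e₂) (cG N e₂)) (W t') :=
        (Con.ker_rel _).mp (hle ((Con.eq _).mp ht'))
      have hWW : FreeMonoid.lift (piL (aG N e₁) (bG N e₂) (cG N e₂)) (W t) =
          FreeMonoid.lift (piL (aG N e₁) (bG N e₂) (cG N e₂)) (W t') := by
        rw [← hu, ← hv, h]
      rw [lift_W, lift_W] at hWW
      have htt : t = t' := NF_inj N e₁ e₂ t t' hWW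
      show rcon e1 e2 k u v
      refine (Con.eq _).mp ?_
      rw [show mkQ e1 e2 k u = (u : (rcon e1 e2 k).Quotient) from rfl] at ht
      rw [show mkQ e1 e2 k v = (v : (rcon e1 e2 k).Quotient) from rfl] at ht'
      rw [ht, ht', htt]
    · intro h
      exact (Con.ker_rel _).mp (hle h)
  · -- noetherian
    intro f hf
    exact noetherian e1 e2 k he1 he2 f hf
  · -- unique irreducible representatives
    intro g
    obtain ⟨t, ht⟩ := NF_surj N e₁ e₂ g
    refine ⟨W t, ⟨by rw [lift_W]; exact ht.symm, W_irreducible e1 e2 k t⟩, ?_⟩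
    rintro w ⟨hw, hirr⟩
    obtain ⟨t', rfl⟩ := irreducible_eq_W e1 e2 k w hirr
    rw [lift_W] at hw
    have : t' = t := NF_inj N e₁ e₂ t' t (by rw [hw, ht])
    rw [this]
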